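/- Define A₀(h) = arccos( (5/4 − (1/2+h)²) / (1 + 2h) ) for h ≥ 0 small. Then A₀(h) = √6·h^{1/2} − (7√6/12)·h^{3/2} + (1243√6/1440)·h^{5/2} + O(h^{7/2}) as h → 0⁺. -/

import Mathlib

open Real Asymptotics Filter Topology Finset

lemma cos_bound8 {x : ℝ} (hx : |x| ≤ 1) :
    |Real.cos x - (1 - x ^ 2 / 2 + x ^ 4 / 24 - x ^ 6 / 720)| ≤ |x| ^ 8 * (9 / 322560) :=
  calc
    |Real.cos x - (1 - x ^ 2 / 2 + x ^ 4 / 24 - x ^ 6 / 720)|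
        = ‖Complex.cos x - (1 - (x : ℂ) ^ 2 / 2 + (x:ℂ) ^ 4 / 24 - (x:ℂ) ^ 6 / 720)‖ := by
      rw [← Real.norm_eq_abs, ← Complex.norm_real]; push_cast; simp
    _ = ‖((Complex.exp (x * Complex.I) - ∑ m ∈ range 8, (x * Complex.I) ^ m / m.factorial) +
              (Complex.exp (-x * Complex.I) - ∑ m ∈ range 8, (-x * Complex.I) ^ m / m.factorial)) / 2‖ := by
      congr 1
      rw [Complex.cos]
      simp only [Finset.sum_range_succ, Finset.sum_range_zero, Nat.factorial]
      push_cast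
      apply Complex.ext <;> simp [div_eq_mul_inv, Complex.normSq] <;> ring_nf <;>
        simp [show Complex.I ^ 6 = -1 from by norm_num [pow_succ, Complex.I_mul_I], pow_succ,
          Complex.mul_re, Complex.mul_im] <;> ring_nf
    _ ≤ ‖(Complex.exp (x * Complex.I) - ∑ m ∈ range 8, (x * Complex.I) ^ m / m.factorial) / 2‖ +
          ‖(Complex.exp (-x * Complex.I) - ∑ m ∈ range 8, (-x * Complex.I) ^ m / m.factorial) / 2‖ := by
      rw [add_div]; exact norm_add_le _ _
    _ = ‖Complex.exp (x * Complex.I) - ∑ m ∈ range 8, (x * Complex.I) ^ m / m.factorial‖ / 2 +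
          ‖Complex.exp (-x * Complex.I) - ∑ m ∈ range 8, (-x * Complex.I) ^ m / m.factorial‖ / 2 := by
      simp [map_div₀]
    _ ≤ ‖x * Complex.I‖ ^ 8 * (Nat.succ 8 * ((Nat.factorial 8) * (8 : ℕ) : ℝ)⁻¹) / 2 +
          ‖-x * Complex.I‖ ^ 8 * (Nat.succ 8 * ((Nat.factorial 8) * (8 : ℕ) : ℝ)⁻¹) / 2 := by
      gcongr
      · exact Complex.exp_bound (by simpa) (by norm_num)
      · exact Complex.exp_bound (by simpa) (by norm_num)
    _ ≤ |x| ^ 8 * (9 / 322560) := by norm_num [Nat.factorial]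

set_option maxHeartbeats 2000000 in
lemma A0_main_est {h : ℝ} (hh0 : 0 < h) (hh1 : h < 1/10) :
    |Real.arccos ((5/4 - (1/2 + h) ^ 2) / (1 + 2 * h)) -
      Real.sqrt 6 * Real.sqrt h * (1 - 7/12*h + 1243/1440*h^2)| ≤ 40 * (h^3 * Real.sqrt h) := by
  have hπ3 : (3:ℝ) < π := Real.pi_gt_three
  have hπ315 : π < 3.15 := Real.pi_lt_d2
  set s := Real.sqrt h with hs_def
  have hs0 : 0 < s := Real.sqrt_pos.2 hh0
  have hs2 : s ^ 2 = h := Real.sq_sqrt hh0.le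
  have hs_ub : s ≤ 1/3 := by nlinarith
  clear_value s
  set q : ℝ := 1 - 7/12*h + 1243/1440*h^2 with hq_def
  have hq_lb : 9/10 ≤ q := by rw [hq_def]; nlinarith
  have hq_ub : q ≤ 1 := by rw [hq_def]; nlinarith
  clear_value q
  have hr62 : Real.sqrt 6 ^ 2 = 6 := Real.sq_sqrt (by norm_num)
  have hr60 : (0:ℝ) ≤ Real.sqrt 6 := Real.sqrt_nonneg 6
  have hr6ub : Real.sqrt 6 ≤ 5/2 := by nlinarith
  set P : ℝ := Real.sqrt 6 * s * q with hP_def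
  have hP0 : 0 ≤ P := by
    rw [hP_def]; exact mul_nonneg (mul_nonneg hr60 hs0.le) (by linarith)
  have hP2 : P ^ 2 = 6 * (h * q ^ 2) := by rw [hP_def, mul_pow, mul_pow, hr62, hs2]; ring
  have hP_ub : P ≤ 5/6 := by
    have h1 : Real.sqrt 6 * s ≤ 5/2 * (1/3) := mul_le_mul hr6ub hs_ub hs0.le (by norm_num)
    have h2 : Real.sqrt 6 * s * q ≤ 5/2 * (1/3) * 1 :=
      mul_le_mul h1 hq_ub (by linarith) (by norm_num)
    rw [hP_def]; linarith
  clear_value P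
  set u : ℝ := (5/4 - (1/2 + h) ^ 2) / (1 + 2 * h) with hu_def
  have hden : (0:ℝ) < 1 + 2*h := by linarith
  have hu_eq : (1 - u) * (1 + 2*h) = h * (3 + h) := by
    rw [hu_def]; field_simp; ring
  clear_value u
  have hv_lb : 5/2 * h ≤ 1 - u := by nlinarith
  have hv_ub : 1 - u ≤ 31/10 * h := by nlinarith
  have hu0 : (0:ℝ) ≤ u := by linarith
  have hu1 : u ≤ 1 := by linarith
  set x := Real.arccos u with hx_def
  have hx0 : 0 ≤ x := Real.arccos_nonneg u
  have hx_half : x ≤ π/2 := Real.arccos_le_pi_div_two.2 hu0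
  have hcosx : Real.cos x = u := Real.cos_arccos (by linarith) hu1
  have hx_lb : 2*s ≤ x := by
    have h1 : 1 - x^2/2 ≤ Real.cos x := Real.one_sub_sq_div_two_le_cos
    nlinarith
  clear_value x
  -- bound |cos P - u|
  have hyabs : |P| ≤ 1 := by rw [abs_of_nonneg hP0]; linarith
  have hcb := cos_bound8 hyabs
  rw [abs_of_nonneg hP0] at hcb
  have hP4 : P ^ 4 = 36 * (h^2 * q^4) := by
    rw [show P^4 = (P^2)^2 by ring, hP2]; ring
  have hP6 : P ^ 6 = 216 * (h^3 * q^6) := by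
    rw [show P^6 = (P^2)^3 by ring, hP2]; ring
  have hP8 : P ^ 8 = 1296 * (h^4 * q^8) := by
    rw [show P^8 = (P^2)^4 by ring, hP2]; ring
  have hq8 : q ^ 8 ≤ 1 := pow_le_one₀ (by linarith) hq_ub
  have hcb2 : |Real.cos P - (1 - 3*(h*q^2) + 3/2*(h^2*q^4) - 3/10*(h^3*q^6))| ≤ h^4 * (1/10) := by
    have e : (1 - P^2/2 + P^4/24 - P^6/720) = 1 - 3*(h*q^2) + 3/2*(h^2*q^4) - 3/10*(h^3*q^6) := by
      rw [hP2, hP4, hP6]; ring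
    rw [← e]
    refine hcb.trans ?_
    rw [hP8]
    nlinarith [pow_nonneg hh0.le 4, pow_nonneg (show (0:ℝ) ≤ q by linarith) 8]
  -- polynomial part
  have hpoly_u : |(1 - 3*(h*q^2) + 3/2*(h^2*q^4) - 3/10*(h^3*q^6)) - u| ≤ 15 * h^4 := by
    set E : ℝ := (-22139/2880) + (6255959/691200)*h + (-203677/15360)*h^2 + (575623/32400)*h^3
        + (-4691789599/248832000)*h^4 + (4890632099/238878720)*h^5
        + (-49823532319919/2866544640000)*h^6 + (39788882095259/2866544640000)*h^7
        + (-34299604199663/3439853568000)*h^8 + (539738090199187/95551488000000)*h^9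
        + (-120626411295034931/41278242816000000)*h^10
        + (26221679099789832791/29720334827520000000)*h^11
        + (-3688304528803752649/14860167413760000000)*h^12 with hE_def
    have hEid : ((1 - 3*(h*q^2) + 3/2*(h^2*q^4) - 3/10*(h^3*q^6)) - u) * (1+2*h) = h^4 * E := by
      rw [hq_def, hE_def]
      linear_combination hu_eq
    have hEb : |E| ≤ 15 := by
      have k2 : h^2 ≤ h := pow_le_of_le_one hh0.le (by linarith) (by norm_num)
      have k3 : h^3 ≤ h := pow_le_of_le_one hh0.le (by linarith) (by norm_num)
      have k4 : h^4 ≤ h := pow_le_of_le_one hh0.le (by linarith) (by norm_num)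
      have k5 : h^5 ≤ h := pow_le_of_le_one hh0.le (by linarith) (by norm_num)
      have k6 : h^6 ≤ h := pow_le_of_le_one hh0.le (by linarith) (by norm_num)
      have k7 : h^7 ≤ h := pow_le_of_le_one hh0.le (by linarith) (by norm_num)
      have k8 : h^8 ≤ h := pow_le_of_le_one hh0.le (by linarith) (by norm_num)
      have k9 : h^9 ≤ h := pow_le_of_le_one hh0.le (by linarith) (by norm_num)
      have k10 : h^10 ≤ h := pow_le_of_le_one hh0.le (by linarith) (by norm_num)
      have k11 : h^11 ≤ h := pow_le_of_le_one hh0.le (by linarith) (by norm_num)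
      have k12 : h^12 ≤ h := pow_le_of_le_one hh0.le (by linarith) (by norm_num)
      have n2 : (0:ℝ) ≤ h^2 := by positivity
      have n3 : (0:ℝ) ≤ h^3 := by positivity
      have n4 : (0:ℝ) ≤ h^4 := by positivity
      have n5 : (0:ℝ) ≤ h^5 := by positivity
      have n6 : (0:ℝ) ≤ h^6 := by positivity
      have n7 : (0:ℝ) ≤ h^7 := by positivity
      have n8 : (0:ℝ) ≤ h^8 := by positivity
      have n9 : (0:ℝ) ≤ h^9 := by positivity
      have n10 : (0:ℝ) ≤ h^10 := by positivity
      have n11 : (0:ℝ) ≤ h^11 := by positivity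
      have n12 : (0:ℝ) ≤ h^12 := by positivity
      rw [hE_def, abs_le]
      constructor <;>
        linarith only [k2, k3, k4, k5, k6, k7, k8, k9, k10, k11, k12, n2, n3, n4, n5, n6, n7,
          n8, n9, n10, n11, n12, hh0.le, hh1.le]
    have habs : |(1 - 3*(h*q^2) + 3/2*(h^2*q^4) - 3/10*(h^3*q^6)) - u| * (1+2*h) = h^4 * |E| := by
      rw [← abs_of_pos hden, ← abs_mul, hEid, abs_mul, abs_of_nonneg (pow_nonneg hh0.le 4)]
    clear_value E
    clear hE_def hEid
    set A := |(1 - 3*(h*q^2) + 3/2*(h^2*q^4) - 3/10*(h^3*q^6)) - u| with hA_def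
    have e0 : 0 ≤ A := hA_def ▸ abs_nonneg _
    have e1 : 0 ≤ A * h := mul_nonneg e0 hh0.le
    have e2 : A * (1+2*h) = A + 2*(A*h) := by ring
    have e3 : h^4 * |E| ≤ h^4 * 15 := mul_le_mul_of_nonneg_left hEb (pow_nonneg hh0.le 4)
    linarith only [habs, e1, e2, e3]
  have hclose : |Real.cos P - u| ≤ 16 * h^4 := by
    have htri := abs_sub_le (Real.cos P) (1 - 3*(h*q^2) + 3/2*(h^2*q^4) - 3/10*(h^3*q^6)) u
    linarith only [htri, hcb2, hpoly_u, pow_nonneg hh0.le 4]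
  -- inversion via cos_sub_cos
  have hy_half : P ≤ π/2 := by linarith only [hP_ub, hπ3]
  have hkey : Real.cos x - Real.cos P = -2 * Real.sin ((x+P)/2) * Real.sin ((x-P)/2) :=
    Real.cos_sub_cos x P
  have ha2 : (x+P)/2 ≤ π/2 := by linarith only [hx_half, hy_half]
  have hsa : Real.sin (x/2) ≤ Real.sin ((x+P)/2) :=
    Real.sin_le_sin_of_le_of_le_pi_div_two (by linarith only [hx0, hπ3]) ha2
      (by linarith only [hP0])
  have hsa2 : 2/π * (x/2) ≤ Real.sin (x/2) :=
    Real.mul_le_sin (by linarith only [hx0]) (by linarith only [hx_half, hπ3])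
  have hπ0 : (0:ℝ) < π := by linarith only [hπ3]
  have hsa' : 2*s ≤ π * Real.sin ((x+P)/2) := by
    have h1 : 2/π * (x/2) ≤ Real.sin ((x+P)/2) := le_trans hsa2 hsa
    rw [div_mul_eq_mul_div, div_le_iff₀ hπ0] at h1
    linarith only [h1, hx_lb]
  have hb_abs : |(x-P)/2| ≤ π/2 := by
    rw [abs_le]
    constructor
    · linarith only [hx0, hP_ub, hπ3]
    · linarith only [hx_half, hP0, hπ3]
  have hsb2 : 2/π * |(x-P)/2| ≤ Real.sin |(x-P)/2| := Real.mul_le_sin (abs_nonneg _) hb_abs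
  have hsinabs : Real.sin |(x-P)/2| = |Real.sin ((x-P)/2)| := by
    rcases le_or_gt 0 ((x-P)/2) with hb | hb
    · rw [abs_of_nonneg hb, abs_of_nonneg (Real.sin_nonneg_of_nonneg_of_le_pi hb
        (by linarith only [(abs_le.1 hb_abs).2, hπ3]))]
    · have hb' : 0 ≤ -((x-P)/2) := by linarith only [hb]
      have h4 : 0 ≤ Real.sin (-((x-P)/2)) :=
        Real.sin_nonneg_of_nonneg_of_le_pi hb' (by linarith only [(abs_le.1 hb_abs).1, hπ3])
      rw [Real.sin_neg] at h4
      rw [abs_of_neg hb, Real.sin_neg, abs_of_nonpos (by linarith only [h4])]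
  have hsb' : |x - P| ≤ π * |Real.sin ((x-P)/2)| := by
    rw [hsinabs, div_mul_eq_mul_div, div_le_iff₀ hπ0] at hsb2
    have e : |x - P| = 2 * |(x-P)/2| := by rw [abs_div, abs_two]; ring
    linarith only [hsb2, e]
  have hsa_nonneg : 0 ≤ Real.sin ((x+P)/2) := by
    by_contra hneg
    push_neg at hneg
    have h5 : π * Real.sin ((x+P)/2) < 0 := mul_neg_of_pos_of_neg hπ0 hneg
    linarith only [h5, hsa', hs0]
  have habs_eq : |Real.cos x - Real.cos P| = 2 * Real.sin ((x+P)/2) * |Real.sin ((x-P)/2)| := by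
    rw [hkey, abs_mul, abs_mul, abs_of_nonneg hsa_nonneg]
    norm_num
  have he1 : |Real.cos x - Real.cos P| ≤ 16 * h^4 := by
    rw [hcosx, abs_sub_comm]; exact hclose
  rw [habs_eq] at he1
  have hmul : (2*s) * |x - P| ≤ (π * Real.sin ((x+P)/2)) * (π * |Real.sin ((x-P)/2)|) :=
    mul_le_mul hsa' hsb' (abs_nonneg _) (by positivity)
  have hh4 : h^4 = h^3 * s^2 := by rw [hs2]; ring
  have he3 := mul_le_mul_of_nonneg_left he1 (show (0:ℝ) ≤ π^2/2 by positivity)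
  have hπsq : π^2 ≤ 9.9225 := by nlinarith only [hπ315, hπ3]
  nlinarith only [hmul, he3, hπsq, hh4, hs0, pow_nonneg hh0.le 4, pow_nonneg hh0.le 3,
    abs_nonneg (x - P), mul_nonneg (pow_nonneg hh0.le 3) hs0.le]

theorem A0_expansion :
    (fun h : ℝ => Real.arccos ((5/4 - (1/2 + h) ^ 2) / (1 + 2 * h)) -
        (Real.sqrt 6 * h ^ ((1:ℝ)/2) - (7 * Real.sqrt 6 / 12) * h ^ ((3:ℝ)/2)
          + (1243 * Real.sqrt 6 / 1440) * h ^ ((5:ℝ)/2)))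
      =O[𝓝[>] (0:ℝ)] (fun h : ℝ => h ^ ((7:ℝ)/2)) := by
  rw [isBigO_iff]
  refine ⟨40, ?_⟩
  filter_upwards [Ioo_mem_nhdsGT_of_mem (show (0:ℝ) ∈ Set.Ico (0:ℝ) (1/10) by norm_num)] with h hh
  obtain ⟨hh0, hh1⟩ := hh
  have hs : (0:ℝ) ≤ Real.sqrt h := Real.sqrt_nonneg h
  have e1 : h ^ ((1:ℝ)/2) = Real.sqrt h := (Real.sqrt_eq_rpow h).symm
  have e3 : h ^ ((3:ℝ)/2) = h * Real.sqrt h := by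
    rw [show (3:ℝ)/2 = 1 + 1/2 by norm_num, Real.rpow_add hh0, Real.rpow_one, ← Real.sqrt_eq_rpow]
  have e5 : h ^ ((5:ℝ)/2) = h^2 * Real.sqrt h := by
    rw [show (5:ℝ)/2 = (2:ℕ) + 1/2 by norm_num, Real.rpow_add hh0, Real.rpow_natCast,
      ← Real.sqrt_eq_rpow]
  have e7 : h ^ ((7:ℝ)/2) = h^3 * Real.sqrt h := by
    rw [show (7:ℝ)/2 = (3:ℕ) + 1/2 by norm_num, Real.rpow_add hh0, Real.rpow_natCast,
      ← Real.sqrt_eq_rpow]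
  rw [Real.norm_eq_abs, Real.norm_eq_abs, e1, e3, e5, e7,
    abs_of_nonneg (by positivity : (0:ℝ) ≤ h^3 * Real.sqrt h)]
  have key := A0_main_est hh0 hh1
  have : Real.sqrt 6 * Real.sqrt h - 7 * Real.sqrt 6 / 12 * (h * Real.sqrt h)
      + 1243 * Real.sqrt 6 / 1440 * (h^2 * Real.sqrt h)
      = Real.sqrt 6 * Real.sqrt h * (1 - 7/12*h + 1243/1440*h^2) := by ring
  rw [this]
  exact key
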